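/- The number of labelled tournaments on n vertices with inversion number at most k−1 is at most n! · 2^{n(k−1)}. -/

import Mathlib

/-- Inverting a set `X` in a digraph `D`: edges with both endpoints in `X`
are reversed, all other edges are unchanged. -/
def Invert {V : Type*} (D : V → V → Prop) (X : Set V) : V → V → Prop :=
  fun u v => (u ∈ X ∧ v ∈ X ∧ D v u) ∨ (¬(u ∈ X ∧ v ∈ X) ∧ D u v)

/-- A digraph is acyclic if it has no directed cycle. -/
def IsAcyclic {V : Type*} (D : V → V → Prop) : Prop :=
  ∀ x : V, ¬ Relation.TransGen D x x

/-- A loopless digraph without digons (an oriented graph). -/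
def IsOriented {V : Type*} (D : V → V → Prop) : Prop :=
  ∀ u v, D u v → ¬ D v u

/-- A tournament: an oriented graph with exactly one edge between any two
distinct vertices. -/
def IsTournament {V : Type*} (D : V → V → Prop) : Prop :=
  (∀ u v, D u v → ¬ D v u) ∧ ∀ u v, u ≠ v → D u v ∨ D v u

/-- The inversion number of a digraph: the minimum length of a decycling
family, i.e. a sequence of sets whose successive inversion makes `D` acyclic. -/
noncomputable def invNum {V : Type*} (D : V → V → Prop) : ℕ :=
  sInf {k | ∃ Xs : List (Set V), Xs.length = k ∧ IsAcyclic (Xs.foldl Invert D)}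

section Aux

variable {V : Type*}

lemma invert_invert (D : V → V → Prop) (X : Set V) : Invert (Invert D X) X = D := by
  funext u v
  apply propext
  by_cases hu : u ∈ X <;> by_cases hv : v ∈ X <;> simp [Invert, hu, hv]

lemma invert_empty (D : V → V → Prop) : Invert D (∅ : Set V) = D := by
  funext u v; simp [Invert]

lemma isTournament_invert {D : V → V → Prop} (h : IsTournament D) (X : Set V) :
    IsTournament (Invert D X) := by
  obtain ⟨h1, h2⟩ := h
  constructor
  · intro u v huv hvu
    have a := h1 u v; have b := h1 v u
    by_cases hu : u ∈ X <;> by_cases hv : v ∈ X <;> simp_all [Invert] <;> tauto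
  · intro u v hne
    rcases h2 u v hne with h' | h' <;>
      by_cases hu : u ∈ X <;> by_cases hv : v ∈ X <;> simp [Invert, hu, hv] <;> tauto

lemma isTournament_foldl {D : V → V → Prop} (h : IsTournament D) (Xs : List (Set V)) :
    IsTournament (Xs.foldl Invert D) := by
  induction Xs generalizing D with
  | nil => exact h
  | cons X Xs ih => exact ih (isTournament_invert h X)

lemma foldl_invert_reverse (D : V → V → Prop) (Xs : List (Set V)) :
    Xs.reverse.foldl Invert (Xs.foldl Invert D) = D := by
  induction Xs generalizing D with
  | nil => rfl
  | cons X Xs ih =>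
    simp only [List.foldl_cons, List.reverse_cons, List.foldl_append, List.foldl_cons,
      List.foldl_nil]
    rw [ih (Invert D X), invert_invert]

lemma foldl_replicate_empty (D : V → V → Prop) (j : ℕ) :
    (List.replicate j (∅ : Set V)).foldl Invert D = D := by
  induction j generalizing D with
  | zero => rfl
  | succ j ih =>
    rw [List.replicate_succ, List.foldl_cons, invert_empty]
    exact ih D

lemma isAcyclic_of_trans_irrefl {D : V → V → Prop} (ht : Transitive D)
    (hi : ∀ x, ¬ D x x) : IsAcyclic D := fun x hx =>
  hi x (by haveI : IsTrans V D := ⟨fun _ _ _ => @ht _ _ _⟩; rwa [Relation.transGen_eq_self] at hx)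

lemma ofFn_get_cast {α : Type*} {l : List α} {m : ℕ} (h : l.length = m) :
    List.ofFn (fun i : Fin m => l.get (Fin.cast h.symm i)) = l := by
  subst h
  exact List.ofFn_get l

end Aux

open Classical in
lemma exists_decycle {n : ℕ} : ∀ (m : ℕ) (T : Fin n → Fin n → Prop), IsTournament T →
    (Finset.univ.filter (fun p : Fin n × Fin n => p.1 < p.2 ∧ T p.2 p.1)).card ≤ m →
    ∃ Xs : List (Set (Fin n)), Xs.foldl Invert T = fun u v => u < v := by
  intro m
  induction m with
  | zero =>
    intro T hT hcard
    have hempty : ∀ p : Fin n × Fin n, ¬(p.1 < p.2 ∧ T p.2 p.1) := by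
      intro p hp
      have hmem : p ∈ Finset.univ.filter (fun p : Fin n × Fin n => p.1 < p.2 ∧ T p.2 p.1) :=
        Finset.mem_filter.mpr ⟨Finset.mem_univ _, hp⟩
      rw [Finset.card_eq_zero.mp (Nat.le_zero.mp hcard)] at hmem
      exact absurd hmem (Finset.notMem_empty p)
    refine ⟨[], ?_⟩
    show T = fun u v => u < v
    funext u v
    apply propext
    constructor
    · intro h
      rcases lt_trichotomy u v with h' | h' | h'
      · exact h'
      · subst h'; exact absurd h (fun hh => hT.1 u u hh hh)
      · exact absurd ⟨h', h⟩ (hempty (v, u))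
    · intro h
      rcases hT.2 u v (ne_of_lt h) with h' | h'
      · exact h'
      · exact absurd ⟨h, h'⟩ (hempty (u, v))
  | succ m ih =>
    intro T hT hcard
    by_cases hle : (Finset.univ.filter (fun p : Fin n × Fin n => p.1 < p.2 ∧ T p.2 p.1)).card ≤ m
    · exact ih T hT hle
    · have hpos : 0 < (Finset.univ.filter
          (fun p : Fin n × Fin n => p.1 < p.2 ∧ T p.2 p.1)).card := by omega
      obtain ⟨⟨u, v⟩, hp⟩ := Finset.card_pos.mp hpos
      obtain ⟨-, hlt, hTvu⟩ := Finset.mem_filter.mp hp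
      simp only at hlt hTvu
      set X : Set (Fin n) := {u, v} with hX
      have huX : u ∈ X := Set.mem_insert _ _
      have hvX : v ∈ X := Set.mem_insert_of_mem _ rfl
      set T' := Invert T X with hT'def
      have hT' : IsTournament T' := isTournament_invert hT X
      have hsub : (Finset.univ.filter (fun p : Fin n × Fin n => p.1 < p.2 ∧ T' p.2 p.1)) ⊆
          (Finset.univ.filter (fun p : Fin n × Fin n => p.1 < p.2 ∧ T p.2 p.1)).erase (u, v) := by
        rintro ⟨a, b⟩ hq
        obtain ⟨-, hq1, hq2⟩ := Finset.mem_filter.mp hq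
        simp only at hq1 hq2
        by_cases hcase : b ∈ X ∧ a ∈ X
        · -- then (a, b) = (u, v)
          have hab : a = u ∧ b = v := by
            rcases hcase.1 with rfl | rfl <;> rcases hcase.2 with rfl | rfl
            · exact absurd hq1 (lt_irrefl _)
            · exact absurd (hq1.trans hlt) (lt_irrefl _)
            · exact ⟨rfl, rfl⟩
            · exact absurd hq1 (lt_irrefl _)
          obtain ⟨rfl, rfl⟩ := hab
          -- hq2 : T' b a, i.e., T a b, contradicting T b a
          have hTab : T a b := by
            rcases hq2 with ⟨-, -, h⟩ | ⟨hn, -⟩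
            · exact h
            · exact absurd ⟨hvX, huX⟩ hn
          exact absurd hTvu (hT.1 a b hTab)
        · have hTba : T b a := by
            rcases hq2 with ⟨hb, ha, -⟩ | ⟨-, h⟩
            · exact absurd ⟨hb, ha⟩ hcase
            · exact h
          refine Finset.mem_erase.mpr ⟨?_, Finset.mem_filter.mpr ⟨Finset.mem_univ _, hq1, hTba⟩⟩
          intro hEq
          rw [Prod.mk.injEq] at hEq
          obtain ⟨rfl, rfl⟩ := hEq
          exact hcase ⟨hvX, huX⟩
      have hcard' : (Finset.univ.filter
          (fun p : Fin n × Fin n => p.1 < p.2 ∧ T' p.2 p.1)).card ≤ m := by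
        have h1 := Finset.card_le_card hsub
        rw [Finset.card_erase_of_mem hp] at h1
        omega
      obtain ⟨Xs, hXs⟩ := ih T' hT' hcard'
      exact ⟨X :: Xs, hXs⟩

lemma exists_perm {n : ℕ} {D : Fin n → Fin n → Prop} (hT : IsTournament D) (hA : IsAcyclic D) :
    ∃ σ : Equiv.Perm (Fin n), D = fun u v => σ u < σ v := by
  classical
  have htrans : ∀ a b c, D a b → D b c → D a c := by
    intro a b c hab hbc
    by_cases hac : a = c
    · subst hac
      exact absurd (Relation.TransGen.head hab (Relation.TransGen.single hbc)) (hA a)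
    rcases hT.2 a c hac with h | h
    · exact h
    · exact absurd (Relation.TransGen.head hab
        (Relation.TransGen.head hbc (Relation.TransGen.single h))) (hA a)
  have hirr : ∀ a, ¬ D a a := fun a h => hT.1 a a h h
  let r : Fin n → Fin n → Prop := fun a b => a = b ∨ D a b
  haveI : DecidableRel r := Classical.decRel r
  haveI : IsTrans (Fin n) r := ⟨by
    rintro a b c (rfl | hab) hbc
    · exact hbc
    · rcases hbc with rfl | hbc
      · exact Or.inr hab
      · exact Or.inr (htrans _ _ _ hab hbc)⟩
  haveI : IsAntisymm (Fin n) r := ⟨by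
    rintro a b (rfl | hab) h
    · rfl
    · rcases h with rfl | hba
      · rfl
      · exact absurd hba (hT.1 _ _ hab)⟩
  haveI : IsTotal (Fin n) r := ⟨by
    intro a b
    by_cases h : a = b
    · exact Or.inl (Or.inl h)
    · rcases hT.2 a b h with h' | h'
      exacts [Or.inl (Or.inr h'), Or.inr (Or.inr h')]⟩
  let l := Finset.univ.sort r
  have hlen : l.length = n := by
    rw [Finset.length_sort, Finset.card_univ, Fintype.card_fin]
  let e : Fin n → Fin n := fun i => l.get (Fin.cast hlen.symm i)
  have hnodup : l.Nodup := Finset.sort_nodup _ r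
  have hsorted : List.Pairwise r l := Finset.pairwise_sort _ r
  have hkey : ∀ i j : Fin n, D (e i) (e j) ↔ i < j := by
    have hforward : ∀ i j : Fin n, i < j → D (e i) (e j) := by
      intro i j hij
      have hlt : (Fin.cast hlen.symm i) < (Fin.cast hlen.symm j) := hij
      have hr := hsorted.rel_get_of_lt hlt
      rcases hr with heq | hd
      · exact absurd (List.nodup_iff_injective_get.mp hnodup heq)
          (by simp [Fin.ext_iff]; omega)
      · exact hd
    intro i j
    constructor
    · intro h
      rcases lt_trichotomy i j with h' | h' | h'
      · exact h'
      · subst h'; exact absurd h (hirr _)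
      · exact absurd h (hT.1 _ _ (hforward j i h'))
    · exact hforward i j
  have hinj : Function.Injective e := by
    intro i j hij
    have := List.nodup_iff_injective_get.mp hnodup hij
    simpa [Fin.ext_iff] using this
  have hbij : Function.Bijective e := (Finite.injective_iff_bijective).mp hinj
  let σ : Equiv.Perm (Fin n) := (Equiv.ofBijective e hbij).symm
  refine ⟨σ, ?_⟩
  funext a b
  apply propext
  have ha : e (σ a) = a := Equiv.ofBijective_apply_symm_apply e hbij a
  have hb : e (σ b) = b := Equiv.ofBijective_apply_symm_apply e hbij b
  conv_lhs => rw [← ha, ← hb]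
  exact hkey (σ a) (σ b)

/-- The number of labelled tournaments on `n` vertices with inversion number at
most `k − 1` is at most `n! · 2^{n(k−1)}`. -/
theorem card_tournaments_invNum_le {n k : ℕ} (hk : 1 ≤ k) :
    Nat.card {T : Fin n → Fin n → Prop // IsTournament T ∧ invNum T ≤ k - 1} ≤
      n.factorial * 2 ^ (n * (k - 1)) := by
  classical
  set m := k - 1 with hm
  have hacyD : ∀ σ : Equiv.Perm (Fin n), IsAcyclic (fun u v => σ u < σ v) :=
    fun σ => isAcyclic_of_trans_irrefl (fun a b c hab hbc => lt_trans hab hbc)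
      (fun x => lt_irrefl _)
  let F : Equiv.Perm (Fin n) × (Fin m → Set (Fin n)) →
      {T : Fin n → Fin n → Prop // IsTournament T ∧ invNum T ≤ m} := fun x =>
    ⟨(List.ofFn x.2).foldl Invert (fun u v => x.1 u < x.1 v),
     isTournament_foldl ⟨fun u v h h' => lt_asymm h h',
       fun u v h => (fun hh : x.1 u ≠ x.1 v => hh.lt_or_gt) (fun hh => h (x.1.injective hh))⟩ _,
     Nat.sInf_le ⟨(List.ofFn x.2).reverse, by simp, by
       rw [foldl_invert_reverse]; exact hacyD x.1⟩⟩
  have hsurj : Function.Surjective F := by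
    rintro ⟨T, hT, hinv⟩
    obtain ⟨Xs₀, hXs₀⟩ := exists_decycle _ T hT le_rfl
    have hne : {j | ∃ Xs : List (Set (Fin n)), Xs.length = j ∧
        IsAcyclic (Xs.foldl Invert T)}.Nonempty :=
      ⟨Xs₀.length, Xs₀, rfl, by
        rw [hXs₀]
        exact isAcyclic_of_trans_irrefl (fun a b c hab hbc => lt_trans hab hbc)
          (fun x => lt_irrefl _)⟩
    obtain ⟨Xs₁, hlen₁, hacy₁⟩ := Nat.sInf_mem hne
    have hinv' : Xs₁.length ≤ m := by
      rw [hlen₁]; exact hinv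
    set Xs := Xs₁ ++ List.replicate (m - Xs₁.length) ∅ with hXsdef
    have hlen : Xs.length = m := by
      simp only [hXsdef, List.length_append, List.length_replicate]
      omega
    have hacy : IsAcyclic (Xs.foldl Invert T) := by
      rw [hXsdef, List.foldl_append, foldl_replicate_empty]
      exact hacy₁
    have hT2 : IsTournament (Xs.foldl Invert T) := isTournament_foldl hT Xs
    obtain ⟨σ, hσ⟩ := exists_perm hT2 hacy
    have hrevlen : Xs.reverse.length = m := by rw [List.length_reverse, hlen]
    refine ⟨⟨σ, fun i => Xs.reverse.get (Fin.cast hrevlen.symm i)⟩, ?_⟩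
    apply Subtype.ext
    show (List.ofFn _).foldl Invert _ = T
    rw [ofFn_get_cast hrevlen, ← hσ, foldl_invert_reverse]
  have hcard := Nat.card_le_card_of_surjective F hsurj
  have h1 : Nat.card (Equiv.Perm (Fin n) × (Fin m → Set (Fin n))) =
      n.factorial * 2 ^ (n * m) := by
    rw [Nat.card_prod, Nat.card_fun]
    have h2 : Nat.card (Set (Fin n)) = 2 ^ n := by
      show Nat.card (Fin n → Prop) = 2 ^ n
      rw [Nat.card_fun]
      simp [Nat.card_eq_fintype_card]
    rw [h2]
    simp [Nat.card_eq_fintype_card, Fintype.card_perm, ← pow_mul]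
  rw [h1] at hcard
  exact hcard
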